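/- For the two-parametric Mittag-Leffler-type normalization 𝔼_{α,β}(z) = Γ(β)·Σ_{k≥0} z^k/Γ(β + kα), the Turán-type inequality 𝔼_{α,β}(z)·𝔼_{α,β+2}(z) − 𝔼_{α,β+1}(z)² ≥ 0 holds for all z > 0, α ≥ 0, β > 0. -/

import Mathlib

open Real MeasureTheory Set

private lemma gamma_lb {T x : ℝ} (hT : 1 ≤ T) (hx : 1 ≤ x) :
    Real.exp (-(2 * T)) * T ^ x ≤ Real.Gamma x := by
  have hT0 : (0:ℝ) < T := by linarith
  have hx0 : (0:ℝ) < x := by linarith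
  have hsub : Ioc T (2 * T) ⊆ Ioi (0:ℝ) := fun t ht => lt_trans hT0 ht.1
  rw [Real.Gamma_eq_integral hx0]
  have h1 : ∫ t in Ioc T (2*T), Real.exp (-t) * t ^ (x-1)
      ≤ ∫ t in Ioi (0:ℝ), Real.exp (-t) * t ^ (x-1) := by
    apply setIntegral_mono_set (Real.GammaIntegral_convergent hx0)
    · filter_upwards [ae_restrict_mem measurableSet_Ioi] with t ht
      have : (0:ℝ) < t := ht
      positivity
    · exact hsub.eventuallyLE
  refine le_trans ?_ h1
  have h2 : (Real.exp (-(2*T)) * T ^ (x-1)) * (volume (Ioc T (2*T))).toReal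
      ≤ ∫ t in Ioc T (2*T), Real.exp (-t) * t ^ (x-1) := by
    apply setIntegral_ge_of_const_le_real measurableSet_Ioc (by simp)
    · intro t ht
      have h3 : Real.exp (-(2*T)) ≤ Real.exp (-t) := Real.exp_le_exp.2 (by linarith [ht.2])
      have h4 : T ^ (x-1) ≤ t ^ (x-1) :=
        Real.rpow_le_rpow hT0.le ht.1.le (by linarith)
      have : (0:ℝ) ≤ T ^ (x-1) := (Real.rpow_pos_of_pos hT0 _).le
      exact mul_le_mul h3 h4 this (Real.exp_pos _).le
    · exact (Real.GammaIntegral_convergent hx0).mono_set hsub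
  refine le_trans (le_of_eq ?_) h2
  rw [Real.volume_Ioc, ENNReal.toReal_ofReal (by linarith)]
  have h5 : (2*T - T) = T := by ring
  rw [h5, mul_assoc, ← Real.rpow_add_one hT0.ne' (x-1)]
  ring_nf

private lemma ml_summable {α β z : ℝ} (hα : 0 < α) (hβ : 0 < β) (hz : 0 < z) :
    Summable (fun k : ℕ => z ^ k / Real.Gamma (β + k * α)) := by
  set T : ℝ := max 1 ((2*z) ^ (1/α)) with hTdef
  have hT1 : (1:ℝ) ≤ T := le_max_left _ _
  have hT0 : (0:ℝ) < T := by linarith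
  have hTα0 : (0:ℝ) < T ^ α := Real.rpow_pos_of_pos hT0 _
  have hTα : 2 * z ≤ T ^ α := by
    rcases le_or_gt 1 (2*z) with h | h
    · have h2 : ((2*z) ^ (1/α)) ^ α ≤ T ^ α :=
        Real.rpow_le_rpow (Real.rpow_nonneg (by linarith) _) (le_max_right _ _) hα.le
      rwa [← Real.rpow_mul (by linarith), one_div, inv_mul_cancel₀ hα.ne', Real.rpow_one] at h2
    · calc 2*z ≤ 1 := h.le
        _ ≤ T ^ α := Real.one_le_rpow hT1 hα.le
  set r : ℝ := z / T ^ α with hrdef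
  have hr0 : 0 ≤ r := div_nonneg hz.le hTα0.le
  have hr1 : r < 1 := (div_lt_one hTα0).2 (by linarith)
  set K : ℕ := ⌈1/α⌉₊ with hKdef
  have hK : (1:ℝ) ≤ (K:ℝ) * α := by
    have := Nat.le_ceil (1/α)
    calc (1:ℝ) = (1/α) * α := by field_simp
      _ ≤ (K:ℝ) * α := by
        apply mul_le_mul_of_nonneg_right this hα.le
  rw [← summable_nat_add_iff K]
  have hpow : ∀ n : ℕ, T ^ (β + (n:ℝ) * α) = T ^ β * (T ^ α) ^ n := by
    intro n
    rw [Real.rpow_add hT0, mul_comm (n:ℝ) α, Real.rpow_mul hT0.le, Real.rpow_natCast]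
  apply Summable.of_nonneg_of_le
    (g := fun n : ℕ => z ^ (n + K) / Real.Gamma (β + ((n + K : ℕ):ℝ) * α))
    (f := fun n : ℕ => (Real.exp (2*T) / T ^ β * r ^ K) * r ^ n)
  · intro n
    have hx0 : (0:ℝ) < β + ((n + K : ℕ):ℝ) * α := by positivity
    exact le_of_lt (div_pos (pow_pos hz _) (Real.Gamma_pos_of_pos hx0))
  · intro n
    have hx1 : (1:ℝ) ≤ β + ((n + K : ℕ):ℝ) * α := by
      push_cast
      nlinarith [mul_nonneg (Nat.cast_nonneg (α := ℝ) n) hα.le]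
    have hg := gamma_lb hT1 hx1
    have hL : (0:ℝ) < Real.exp (-(2*T)) * T ^ (β + ((n + K : ℕ):ℝ) * α) := by
      have := Real.rpow_pos_of_pos hT0 (β + ((n + K : ℕ):ℝ) * α)
      positivity
    calc z ^ (n + K) / Real.Gamma (β + ((n + K : ℕ):ℝ) * α)
        ≤ z ^ (n + K) / (Real.exp (-(2*T)) * T ^ (β + ((n + K : ℕ):ℝ) * α)) := by
          apply div_le_div_of_nonneg_left (by positivity) hL hg
      _ = (Real.exp (2*T) / T ^ β * r ^ K) * r ^ n := by
          rw [hpow (n + K), Real.exp_neg, hrdef]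
          have hTβ : (0:ℝ) < T ^ β := Real.rpow_pos_of_pos hT0 _
          rw [div_pow, div_pow, pow_add z n K, pow_add (T ^ α) n K]
          field_simp
  · exact (summable_geometric_of_lt_one hr0 hr1).mul_left _

private lemma core {β x G H w : ℝ} (hβ : 0 < β) (hx : 0 < x) (hβx : β ≤ x)
    (hG : 0 < G) (hH : 0 < H) (hw : 0 < w) :
    (β * G * (w / (x * H))) ^ 2 ≤ (G * (w / H)) * ((β+1) * (β * G) * (w / ((x+1)*(x*H)))) := by
  have hx1 : (0:ℝ) < x + 1 := by linarith
  have e1 : (β * G * (w / (x * H))) ^ 2 = (β^2 * G^2 * w^2) / (x^2 * H^2) := by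
    field_simp
  have e2 : (G * (w / H)) * ((β+1) * (β * G) * (w / ((x+1)*(x*H))))
      = ((β+1) * β * G^2 * w^2) / ((x+1) * x * H^2) := by
    field_simp
  rw [e1, e2, div_le_div_iff₀ (by positivity) (by positivity)]
  have key : β * (x+1) ≤ (β+1) * x := by nlinarith
  nlinarith [mul_le_mul_of_nonneg_right key
    (le_of_lt (by positivity : (0:ℝ) < β * G^2 * w^2 * x * H^2))]

private lemma turan_pos {α β z : ℝ} (hα : 0 < α) (hβ : 0 < β) (hz : 0 < z) :
    0 ≤ (Real.Gamma β * ∑' k : ℕ, z ^ k / Real.Gamma (β + k * α)) *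
          (Real.Gamma (β + 2) * ∑' k : ℕ, z ^ k / Real.Gamma (β + 2 + k * α)) -
        (Real.Gamma (β + 1) * ∑' k : ℕ, z ^ k / Real.Gamma (β + 1 + k * α)) ^ 2 := by
  have hΓβ : 0 < Real.Gamma β := Real.Gamma_pos_of_pos hβ
  set a : ℕ → ℝ := fun k => Real.Gamma β * (z ^ k / Real.Gamma (β + k * α)) with hadef
  set b : ℕ → ℝ := fun k => Real.Gamma (β + 1) * (z ^ k / Real.Gamma (β + 1 + k * α)) with hbdef
  set c : ℕ → ℝ := fun k => Real.Gamma (β + 2) * (z ^ k / Real.Gamma (β + 2 + k * α)) with hcdef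
  have ha : Summable a := (ml_summable hα hβ hz).mul_left _
  have hb : Summable b := (ml_summable hα (by linarith : (0:ℝ) < β + 1) hz).mul_left _
  have hc : Summable c := (ml_summable hα (by linarith : (0:ℝ) < β + 2) hz).mul_left _
  have hann : ∀ k, 0 ≤ a k := by
    intro k
    have h1 : (0:ℝ) < β + k * α := by positivity
    have := Real.Gamma_pos_of_pos h1
    simp only [hadef]
    positivity
  have hcnn : ∀ k, 0 ≤ c k := by
    intro k
    have h1 : (0:ℝ) < β + 2 + k * α := by positivity
    have h2 := Real.Gamma_pos_of_pos h1
    have h3 := Real.Gamma_pos_of_pos (show (0:ℝ) < β + 2 by linarith)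
    simp only [hcdef]
    positivity
  have hbnn : ∀ k, 0 ≤ b k := by
    intro k
    have h1 : (0:ℝ) < β + 1 + k * α := by positivity
    have h2 := Real.Gamma_pos_of_pos h1
    have h3 := Real.Gamma_pos_of_pos (show (0:ℝ) < β + 1 by linarith)
    simp only [hbdef]
    positivity
  have hpt : ∀ k : ℕ, b k ≤ Real.sqrt (a k) * Real.sqrt (c k) := by
    intro k
    have hx : (0:ℝ) < β + k * α := by positivity
    have hβx : β ≤ β + k * α := by
      have : (0:ℝ) ≤ (k:ℝ) * α := by positivity
      linarith
    have hΓx : 0 < Real.Gamma (β + k * α) := Real.Gamma_pos_of_pos hx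
    have e1 : β + 1 + (k:ℝ) * α = (β + (k:ℝ) * α) + 1 := by ring
    have e2 : β + 2 + (k:ℝ) * α = ((β + (k:ℝ) * α) + 1) + 1 := by ring
    have gx1 : Real.Gamma ((β + (k:ℝ) * α) + 1)
        = (β + (k:ℝ) * α) * Real.Gamma (β + (k:ℝ) * α) := Real.Gamma_add_one hx.ne'
    have gx2 : Real.Gamma (((β + (k:ℝ) * α) + 1) + 1)
        = ((β + (k:ℝ) * α) + 1) * ((β + (k:ℝ) * α) * Real.Gamma (β + (k:ℝ) * α)) := by
      rw [Real.Gamma_add_one (by linarith), gx1]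
    have gb1 : Real.Gamma (β + 1) = β * Real.Gamma β := Real.Gamma_add_one hβ.ne'
    have gb2 : Real.Gamma (β + 2) = (β+1) * (β * Real.Gamma β) := by
      have h6 : β + 2 = β + 1 + 1 := by ring
      rw [h6, Real.Gamma_add_one (by linarith), gb1]
    have hsq : b k ^ 2 ≤ a k * c k := by
      simp only [hadef, hbdef, hcdef, e1, e2, gx1, gx2, gb1, gb2]
      exact core hβ hx hβx hΓβ hΓx (pow_pos hz k)
    calc b k = Real.sqrt (b k ^ 2) := by rw [Real.sqrt_sq (hbnn k)]
      _ ≤ Real.sqrt (a k * c k) := Real.sqrt_le_sqrt hsq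
      _ = Real.sqrt (a k) * Real.sqrt (c k) := Real.sqrt_mul (hann k) _
  have hA : 0 ≤ ∑' k, a k := tsum_nonneg hann
  have hC : 0 ≤ ∑' k, c k := tsum_nonneg hcnn
  have hsum : ∑' k, b k ≤ Real.sqrt (∑' k, a k) * Real.sqrt (∑' k, c k) := by
    apply hb.tsum_le_of_sum_le
    intro s
    calc ∑ i ∈ s, b i ≤ ∑ i ∈ s, Real.sqrt (a i) * Real.sqrt (c i) :=
          Finset.sum_le_sum fun i _ => hpt i
      _ ≤ Real.sqrt (∑ i ∈ s, a i) * Real.sqrt (∑ i ∈ s, c i) :=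
          Real.sum_sqrt_mul_sqrt_le s hann hcnn
      _ ≤ Real.sqrt (∑' k, a k) * Real.sqrt (∑' k, c k) :=
          mul_le_mul (Real.sqrt_le_sqrt (ha.sum_le_tsum s (fun i _ => hann i)))
            (Real.sqrt_le_sqrt (hc.sum_le_tsum s (fun i _ => hcnn i)))
            (Real.sqrt_nonneg _) (Real.sqrt_nonneg _)
  have hfinal : (∑' k, b k) ^ 2 ≤ (∑' k, a k) * (∑' k, c k) := by
    have hB : 0 ≤ ∑' k, b k := tsum_nonneg hbnn
    calc (∑' k, b k) ^ 2 ≤ (Real.sqrt (∑' k, a k) * Real.sqrt (∑' k, c k)) ^ 2 :=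
          pow_le_pow_left₀ hB hsum 2
      _ = (∑' k, a k) * (∑' k, c k) := by
          rw [mul_pow, Real.sq_sqrt hA, Real.sq_sqrt hC]
  rw [sub_nonneg]
  have ea : ∑' k, a k = Real.Gamma β * ∑' k : ℕ, z ^ k / Real.Gamma (β + k * α) :=
    tsum_mul_left
  have eb : ∑' k, b k = Real.Gamma (β+1) * ∑' k : ℕ, z ^ k / Real.Gamma (β + 1 + k * α) :=
    tsum_mul_left
  have ec : ∑' k, c k = Real.Gamma (β+2) * ∑' k : ℕ, z ^ k / Real.Gamma (β + 2 + k * α) :=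
    tsum_mul_left
  rw [← ea, ← eb, ← ec]
  exact hfinal

theorem mittagLeffler_turan (α β z : ℝ) (hα : 0 ≤ α) (hβ : 0 < β) (hz : 0 < z) :
    0 ≤ (Real.Gamma β * ∑' k : ℕ, z ^ k / Real.Gamma (β + k * α)) *
          (Real.Gamma (β + 2) * ∑' k : ℕ, z ^ k / Real.Gamma (β + 2 + k * α)) -
        (Real.Gamma (β + 1) * ∑' k : ℕ, z ^ k / Real.Gamma (β + 1 + k * α)) ^ 2 := by
  rcases hα.eq_or_lt with h | h
  · subst h
    simp only [mul_zero, add_zero]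
    rw [tsum_div_const, tsum_div_const, tsum_div_const]
    have h1 : Real.Gamma β ≠ 0 := (Real.Gamma_pos_of_pos hβ).ne'
    have h2 : Real.Gamma (β+1) ≠ 0 := (Real.Gamma_pos_of_pos (by linarith)).ne'
    have h3 : Real.Gamma (β+2) ≠ 0 := (Real.Gamma_pos_of_pos (by linarith)).ne'
    have hcan : ∀ c S : ℝ, c ≠ 0 → c * (S / c) = S := fun c S hc => by field_simp
    rw [hcan _ _ h1, hcan _ _ h3, hcan _ _ h2]
    nlinarith [sq_nonneg (∑' k : ℕ, z ^ k)]
  · exact turan_pos h hβ hz
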